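/- In the setting of the previous statement, the mixture kernel R = (1/2)P_Γ + (1/2)P_{−Γ} satisfies the Peskun ordering R(x,y) ≤ P_MH(x,y) for all x ≠ y, where P_MH is the standard Metropolis–Hastings kernel with the same proposal Q and target π. -/

import Mathlib

/-- Peskun ordering of off-diagonal entries: the equal-weight
mixture R = (P_Γ + P_{−Γ})/2 satisfies R(x,y) ≤ P_MH(x,y) for all x ≠ y, where
P_MH is the standard Metropolis–Hastings kernel with the same proposal and
target. -/
theorem nrmh_mixture_peskun {S : Type*} [Fintype S] [DecidableEq S]
    (pi : S → ℝ) (Q Γ : S → S → ℝ) (PG PmG PMH : Matrix S S ℝ)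
    (hpipos : ∀ x, 0 < pi x) (hpisum : ∑ x, pi x = 1)
    (hQnn : ∀ x y, 0 ≤ Q x y) (hQrow : ∀ x, ∑ y, Q x y = 1)
    (hQsym : ∀ x y, Q x y = 0 ↔ Q y x = 0)
    (hΓskew : ∀ x y, Γ x y = - Γ y x)
    (hΓrow : ∀ x, ∑ y, Γ x y = 0)
    (hΓlb : ∀ x y, -(pi y * Q y x) ≤ Γ x y)
    (hΓub : ∀ x y, -(pi y * Q y x) ≤ -Γ x y)
    (hPG1 : ∀ x y, x ≠ y → pi x * Q x y ≠ 0 →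
      PG x y = Q x y * min 1 ((Γ x y + pi y * Q y x) / (pi x * Q x y)))
    (hPG2 : ∀ x y, x ≠ y → pi x * Q x y = 0 → PG x y = Q x y)
    (hPGdiag : ∀ x, PG x x = 1 - ∑ y ∈ Finset.univ.filter (· ≠ x), PG x y)
    (hPmG1 : ∀ x y, x ≠ y → pi x * Q x y ≠ 0 →
      PmG x y = Q x y * min 1 ((-Γ x y + pi y * Q y x) / (pi x * Q x y)))
    (hPmG2 : ∀ x y, x ≠ y → pi x * Q x y = 0 → PmG x y = Q x y)
    (hPmGdiag : ∀ x, PmG x x = 1 - ∑ y ∈ Finset.univ.filter (· ≠ x), PmG x y)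
    (hPMH1 : ∀ x y, x ≠ y → pi x * Q x y ≠ 0 →
      PMH x y = Q x y * min 1 ((pi y * Q y x) / (pi x * Q x y)))
    (hPMH2 : ∀ x y, x ≠ y → pi x * Q x y = 0 → PMH x y = Q x y)
    (hPMHdiag : ∀ x, PMH x x = 1 - ∑ y ∈ Finset.univ.filter (· ≠ x), PMH x y) :
    ∀ x y, x ≠ y → (PG x y + PmG x y) / 2 ≤ PMH x y := by
  intro x y hxy
  by_cases h : pi x * Q x y = 0
  · rw [hPG2 _ _ hxy h, hPmG2 _ _ hxy h, hPMH2 _ _ hxy h]; linarith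
  · rw [hPG1 _ _ hxy h, hPmG1 _ _ hxy h, hPMH1 _ _ hxy h]
    have hQ : 0 ≤ Q x y := hQnn x y
    set d := pi x * Q x y with hd
    set u := (Γ x y + pi y * Q y x) / d
    set v := (-Γ x y + pi y * Q y x) / d
    have huv : u + v = 2 * (pi y * Q y x / d) := by
      simp only [u, v]; rw [← add_div, mul_div_assoc']; congr 1; ring
    have h1 : min 1 u + min 1 v ≤ 2 := by
      have := min_le_left 1 u; have := min_le_left 1 v; linarith
    have h2 : min 1 u + min 1 v ≤ u + v := by
      have := min_le_right 1 u; have := min_le_right 1 v; linarith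
    have key : min 1 u + min 1 v ≤ 2 * min 1 (pi y * Q y x / d) := by
      rcases min_cases 1 (pi y * Q y x / d) with ⟨he, _⟩ | ⟨he, _⟩ <;> rw [he] <;> linarith
    nlinarith [mul_le_mul_of_nonneg_left key hQ]
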